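/- In the random CNOT circuit (no measurements), the relative entropies of coherence C_x and C_z are conserved: a CNOT gate on control i and target j maps X-basis states to X-basis states and Z-basis states to Z-basis states bijectively, hence leaves both the X-basis and Z-basis outcome distributions' Shannon entropies, and thus C_x and C_z of any pure state, unchanged. Consequently, for an initial product state with N_x qubits X-polarized and N_z = L − N_x qubits Z-polarized, the entanglement entropy of the region [1,x] at any time satisfies S(x) ≤ min(x, L − x, N_z, N_x). -/

import Mathlib

open scoped BigOperators

noncomputable section

/-- Bit strings labelling the X (computational) basis of `L` qubits. -/
abbrev QV (L : ℕ) := Fin L → ZMod 2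

/-- Shannon entropy in bits. -/
def shannonEntropy {ι : Type*} [Fintype ι] (P : ι → ℝ) : ℝ :=
  ∑ i, -(P i * Real.logb 2 (P i))

/-- von Neumann entropy in bits of a Hermitian matrix. -/
def vonNeumannEntropy {n : Type*} [Fintype n] [DecidableEq n]
    (ρ : Matrix n n ℂ) (hρ : ρ.IsHermitian) : ℝ :=
  ∑ i, -(hρ.eigenvalues i * Real.logb 2 (hρ.eigenvalues i))

/-- In the X basis, the CNOT with control `i` and target `j` permutes basis
states as `x_i ↦ x_i + x_j` (equivalently `|z_i, z_j⟩ ↦ |z_i, z_j ⊕ z_i⟩`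
in the Z basis). -/
def cnotPerm {L : ℕ} (i j : Fin L) (s : QV L) : QV L :=
  Function.update s i (s i + s j)

/-- Apply a sequence of CNOT gates (given as control/target pairs) to a state
written in the X basis. -/
def applyCNOTs {L : ℕ} : List (Fin L × Fin L) → (QV L → ℂ) → (QV L → ℂ)
  | [], ψ => ψ
  | p :: rest, ψ => applyCNOTs rest fun s => ψ (cnotPerm p.1 p.2 s)

/-- Amplitudes of `ψ` in the Z basis (Hadamard transform of the X-basis
amplitudes). -/
def zAmp {L : ℕ} (ψ : QV L → ℂ) (s : QV L) : ℂ :=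
  ((Real.sqrt (2 ^ L) : ℝ)⁻¹ : ℂ) * ∑ t, (-1 : ℂ) ^ (∑ i, (s i * t i).val) * ψ t

/-- Glue a configuration on a region `R` with one on its complement. -/
def merge {L : ℕ} (R : Finset (Fin L)) (a : {i // i ∈ R} → ZMod 2)
    (c : {i // i ∉ R} → ZMod 2) : QV L :=
  fun i => if h : i ∈ R then a ⟨i, h⟩ else c ⟨i, h⟩

/-- Reduced density matrix of the pure state `ψ` on the region `R`. -/
def reducedDM {L : ℕ} (R : Finset (Fin L)) (ψ : QV L → ℂ) :
    Matrix ({i // i ∈ R} → ZMod 2) ({i // i ∈ R} → ZMod 2) ℂ :=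
  fun a b => ∑ c : {i // i ∉ R} → ZMod 2, ψ (merge R a c) * star (ψ (merge R b c))

/-- Qubit polarized along `+X`, in the X basis. -/
def qX : ZMod 2 → ℂ := fun b => if b = 0 then 1 else 0

/-- Qubit polarized along `+Z`, in the X basis. -/
def qZ : ZMod 2 → ℂ := fun _ => ((Real.sqrt 2)⁻¹ : ℝ)

namespace C19

variable {L : ℕ}

lemma zmod2_add_self (b : ZMod 2) : b + b = 0 := by revert b; decide

lemma cnotPerm_involutive {i j : Fin L} (h : i ≠ j) :
    Function.Involutive (cnotPerm i j) := by
  intro s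
  funext k
  unfold cnotPerm
  rcases eq_or_ne k i with rfl | hk
  · simp [Function.update_self, Function.update_of_ne h.symm, zmod2_add_self, add_assoc]
  · simp [Function.update_of_ne hk]

lemma cnotPerm_bijective {i j : Fin L} (h : i ≠ j) :
    Function.Bijective (cnotPerm i j) :=
  (cnotPerm_involutive h).bijective

lemma cnotPerm_add (i j : Fin L) (s t : QV L) :
    cnotPerm i j (s + t) = cnotPerm i j s + cnotPerm i j t := by
  funext k
  unfold cnotPerm
  rcases eq_or_ne k i with rfl | hk
  · simp [Function.update_self]; ring
  · simp [Function.update_of_ne hk]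

def gperm : List (Fin L × Fin L) → QV L → QV L
  | [] => id
  | p :: rest => fun s => cnotPerm p.1 p.2 (gperm rest s)

lemma applyCNOTs_eq (gates : List (Fin L × Fin L)) (ψ : QV L → ℂ) :
    applyCNOTs gates ψ = fun s => ψ (gperm gates s) := by
  induction gates generalizing ψ with
  | nil => rfl
  | cons p rest ih =>
      show applyCNOTs rest _ = _
      rw [ih]
      rfl

lemma gperm_bijective {gates : List (Fin L × Fin L)}
    (h : ∀ p ∈ gates, p.1 ≠ p.2) : Function.Bijective (gperm gates) := by
  induction gates with
  | nil => exact Function.bijective_id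
  | cons p rest ih =>
      exact (cnotPerm_bijective (h p (List.mem_cons_self))).comp
        (ih fun q hq => h q (List.mem_cons_of_mem p hq))

lemma gperm_add (gates : List (Fin L × Fin L)) (s t : QV L) :
    gperm gates (s + t) = gperm gates s + gperm gates t := by
  induction gates with
  | nil => rfl
  | cons p rest ih => show cnotPerm _ _ _ = _; rw [ih, cnotPerm_add]; rfl

lemma gperm_zero (gates : List (Fin L × Fin L)) : gperm gates 0 = 0 := by
  have := gperm_add gates 0 0
  simpa using this.symm

lemma shannon_comp_bij (f : QV L → ℝ) {e : QV L → QV L} (he : Function.Bijective e) :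
    shannonEntropy (fun s => f (e s)) = shannonEntropy f :=
  Fintype.sum_bijective e he _ _ (fun _ => rfl)

/-- dot product in ZMod 2 -/
lemma dot_cnot (i j : Fin L) (h : i ≠ j) (s t : QV L) :
    (∑ k, s k * cnotPerm i j t k) = (∑ k, cnotPerm j i s k * t k) := by
  have key : ∀ (u v : QV L) (a b : Fin L), a ≠ b →
      (∑ k, u k * Function.update v a (v a + v b) k) = (∑ k, u k * v k) + u a * v b := by
    intro u v a b hab
    have : (fun k => u k * Function.update v a (v a + v b) k)
        = Function.update (fun k => u k * v k) a (u a * (v a + v b)) := by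
      funext k
      rcases eq_or_ne k a with rfl | hk
      · simp [Function.update_self]
      · simp [Function.update_of_ne hk]
    rw [this, Finset.sum_update_of_mem (Finset.mem_univ a)]
    have huniv : (∑ k, u k * v k) = u a * v a + ∑ k ∈ Finset.univ \ {a}, u k * v k := by
      rw [← Finset.sum_update_of_mem (Finset.mem_univ a)]
      apply Finset.sum_congr rfl
      intro k _
      rcases eq_or_ne k a with rfl | hk
      · simp [Function.update_self]
      · simp [Function.update_of_ne hk]
    rw [huniv]
    ring
  unfold cnotPerm
  have h1 := key s t i j h
  have h2 : (∑ k, Function.update s j (s j + s i) k * t k) = (∑ k, s k * t k) + s i * t j := by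
    have hcomm : (∑ k, Function.update s j (s j + s i) k * t k)
        = (∑ k, t k * Function.update s j (s j + s i) k) := by
      apply Finset.sum_congr rfl; intro k _; ring
    have hc2 : (∑ k, t k * s k) = (∑ k, s k * t k) := by
      apply Finset.sum_congr rfl; intro k _; ring
    rw [hcomm, key t s j i h.symm, hc2]
    ring
  rw [h1, h2]

lemma zmod2_val_cast (a : ZMod 2) : ((a.val : ℕ) : ZMod 2) = a := by
  revert a; decide

lemma neg_one_pow_congr {a b : ℕ} (h : (a : ZMod 2) = (b : ZMod 2)) :
    (-1 : ℂ) ^ a = (-1 : ℂ) ^ b := by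
  have : a % 2 = b % 2 := by
    have := (ZMod.natCast_eq_natCast_iff a b 2).mp h
    exact this
  rcases Nat.even_or_odd a with ha | ha
  · have hb : Even b := by
      rw [Nat.even_iff] at *; omega
    rw [ha.neg_one_pow, hb.neg_one_pow]
  · have hb : Odd b := by
      rw [Nat.odd_iff] at *; omega
    rw [ha.neg_one_pow, hb.neg_one_pow]

lemma pairing_cnot (i j : Fin L) (h : i ≠ j) (s t : QV L) :
    (-1 : ℂ) ^ (∑ k, (s k * cnotPerm i j t k).val)
      = (-1 : ℂ) ^ (∑ k, ((cnotPerm j i s) k * t k).val) := by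
  apply neg_one_pow_congr
  push_cast
  calc (∑ k, (((s k * cnotPerm i j t k).val : ℕ) : ZMod 2))
      = ∑ k, s k * cnotPerm i j t k := by
        apply Finset.sum_congr rfl; intro k _; exact zmod2_val_cast _
    _ = ∑ k, cnotPerm j i s k * t k := dot_cnot i j h s t
    _ = ∑ k, (((cnotPerm j i s k * t k).val : ℕ) : ZMod 2) := by
        apply Finset.sum_congr rfl; intro k _; exact (zmod2_val_cast _).symm

lemma zAmp_cnot (i j : Fin L) (h : i ≠ j) (ψ : QV L → ℂ) (s : QV L) :
    zAmp (fun t => ψ (cnotPerm i j t)) s = zAmp ψ (cnotPerm j i s) := by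
  unfold zAmp
  congr 1
  apply Fintype.sum_bijective (cnotPerm i j) (cnotPerm_bijective h)
    (fun t => (-1 : ℂ) ^ (∑ k, (s k * t k).val) * ψ (cnotPerm i j t))
    (fun u => (-1 : ℂ) ^ (∑ k, ((cnotPerm j i s) k * u k).val) * ψ u)
  intro t
  have ht : cnotPerm i j (cnotPerm i j t) = t := cnotPerm_involutive h t
  calc ((-1 : ℂ) ^ (∑ k, (s k * t k).val)) * ψ (cnotPerm i j t)
      = ((-1 : ℂ) ^ (∑ k, (s k * (cnotPerm i j (cnotPerm i j t)) k).val)) * ψ (cnotPerm i j t) := by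
        rw [ht]
    _ = ((-1 : ℂ) ^ (∑ k, ((cnotPerm j i s) k * (cnotPerm i j t) k).val)) * ψ (cnotPerm i j t) := by
        rw [pairing_cnot i j h s (cnotPerm i j t)]

def dperm : List (Fin L × Fin L) → QV L → QV L
  | [] => id
  | p :: rest => fun s => cnotPerm p.2 p.1 (dperm rest s)

lemma dperm_bijective {gates : List (Fin L × Fin L)}
    (h : ∀ p ∈ gates, p.1 ≠ p.2) : Function.Bijective (dperm gates) := by
  induction gates with
  | nil => exact Function.bijective_id
  | cons p rest ih =>
      exact (cnotPerm_bijective (h p (List.mem_cons_self)).symm).comp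
        (ih fun q hq => h q (List.mem_cons_of_mem p hq))

lemma zAmp_applyCNOTs {gates : List (Fin L × Fin L)}
    (h : ∀ p ∈ gates, p.1 ≠ p.2) (ψ : QV L → ℂ) (s : QV L) :
    zAmp (applyCNOTs gates ψ) s = zAmp ψ (dperm gates s) := by
  induction gates generalizing ψ with
  | nil => rfl
  | cons p rest ih =>
      show zAmp (applyCNOTs rest fun t => ψ (cnotPerm p.1 p.2 t)) s = _
      rw [ih (fun q hq => h q (List.mem_cons_of_mem p hq)),
        zAmp_cnot p.1 p.2 (h p (List.mem_cons_self))]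
      rfl

end C19


-- ============ Part 2 : counting infrastructure ============

namespace C19

lemma mfu {α : Type*} [Fintype α] {p : α → Prop} [DecidablePred p] {x : α} :
    x ∈ Finset.univ.filter p ↔ p x := by simp

lemma fun_add_self {α : Type*} (f : α → ZMod 2) : f + f = 0 := by
  funext i; exact zmod2_add_self (f i)

lemma fun_add_add_cancel {α : Type*} (f g : α → ZMod 2) : f + (f + g) = g := by
  rw [← add_assoc, fun_add_self, zero_add]

section Counting

variable {L : ℕ} (R : Finset (Fin L)) (P : QV L → Prop) [DecidablePred P]

lemma merge_add (a a' : {i // i ∈ R} → ZMod 2) (z z' : {i // i ∉ R} → ZMod 2) :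
    merge R a z + merge R a' z' = merge R (a + a') (z + z') := by
  funext i
  by_cases h : i ∈ R <;> simp [merge, h]

lemma merge_zero : merge R (0 : {i // i ∈ R} → ZMod 2) (0 : {i // i ∉ R} → ZMod 2) = 0 := by
  funext i
  by_cases h : i ∈ R <;> simp [merge, h]

lemma merge_restrict (s : QV L) :
    merge R (fun i : {i // i ∈ R} => s i.1) (fun i : {i // i ∉ R} => s i.1) = s := by
  funext i
  by_cases h : i ∈ R <;> simp [merge, h]

lemma prodCard (T : Finset (({i // i ∈ R} → ZMod 2) × ({i // i ∉ R} → ZMod 2)))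
    (hT : ∀ p, p ∈ T ↔ P (merge R p.1 p.2)) :
    T.card = (Finset.univ.filter P).card := by
  apply Finset.card_bij' (fun p _ => merge R p.1 p.2)
    (fun s _ => (fun i : {i // i ∈ R} => s i.1, fun i : {i // i ∉ R} => s i.1))
  · intro p hp
    exact mfu.mpr ((hT p).mp hp)
  · intro s hs
    apply (hT _).mpr
    rw [merge_restrict]
    exact mfu.mp hs
  · intro p _
    apply Prod.ext
    · funext i
      simp [merge, i.2]
    · funext i
      simp [merge, i.2]
  · intro s _
    exact merge_restrict R s

lemma sumA :
    ∑ a : {i // i ∈ R} → ZMod 2,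
        (Finset.univ.filter fun z : {i // i ∉ R} → ZMod 2 => P (merge R a z)).card
      = (Finset.univ.filter P).card := by
  classical
  rw [← prodCard R P (Finset.univ.filter fun p => P (merge R p.1 p.2)) (fun p => mfu)]
  rw [Finset.card_eq_sum_card_fiberwise (f := Prod.fst) (t := Finset.univ)
    (fun p _ => Finset.mem_univ _)]
  apply Finset.sum_congr rfl
  intro a _
  refine Finset.card_bij' (fun z _ => (a, z)) (fun p _ => p.2) ?_ ?_ ?_ ?_
  · intro z hz
    simp only [Finset.mem_filter, Finset.mem_univ, true_and] at hz ⊢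
    exact ⟨hz, trivial⟩
  · rintro ⟨a', z⟩ hp
    simp only [Finset.mem_filter, Finset.mem_univ, true_and] at hp ⊢
    obtain ⟨h1, h2⟩ := hp
    subst h2
    exact h1
  · intro z _
    rfl
  · rintro ⟨a', z⟩ hp
    simp only [Finset.mem_filter, Finset.mem_univ, true_and] at hp
    simp only [Prod.mk.injEq]
    exact ⟨hp.2.symm, trivial⟩

lemma sumB :
    ∑ z : {i // i ∉ R} → ZMod 2,
        (Finset.univ.filter fun a : {i // i ∈ R} → ZMod 2 => P (merge R a z)).card
      = (Finset.univ.filter P).card := by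
  classical
  rw [← prodCard R P (Finset.univ.filter fun p => P (merge R p.1 p.2)) (fun p => mfu)]
  rw [Finset.card_eq_sum_card_fiberwise (f := Prod.snd) (t := Finset.univ)
    (fun p _ => Finset.mem_univ _)]
  apply Finset.sum_congr rfl
  intro z _
  refine Finset.card_bij' (fun a _ => (a, z)) (fun p _ => p.1) ?_ ?_ ?_ ?_
  · intro a ha
    simp only [Finset.mem_filter, Finset.mem_univ, true_and] at ha ⊢
    exact ⟨ha, trivial⟩
  · rintro ⟨a, z'⟩ hp
    simp only [Finset.mem_filter, Finset.mem_univ, true_and] at hp ⊢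
    obtain ⟨h1, h2⟩ := hp
    subst h2
    exact h1
  · intro a _
    rfl
  · rintro ⟨a, z'⟩ hp
    simp only [Finset.mem_filter, Finset.mem_univ, true_and] at hp
    simp only [Prod.mk.injEq]
    exact ⟨trivial, hp.2.symm⟩

variable (hPadd : ∀ u v, P u → P v → P (u + v))

include hPadd in
lemma fiberA_le (a : {i // i ∈ R} → ZMod 2) :
    (Finset.univ.filter fun z : {i // i ∉ R} → ZMod 2 => P (merge R a z)).card
      ≤ (Finset.univ.filter fun z : {i // i ∉ R} → ZMod 2 => P (merge R 0 z)).card := by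
  classical
  rcases (Finset.univ.filter fun z : {i // i ∉ R} → ZMod 2 =>
      P (merge R a z)).eq_empty_or_nonempty with he | hne
  · rw [he]; simp
  · obtain ⟨z₀, hz₀⟩ := hne
    have hz₀' := (Finset.mem_filter.mp hz₀).2
    apply Finset.card_le_card_of_injOn (fun z => z + z₀)
    · intro z hz
      rw [Finset.mem_coe, Finset.mem_filter]
      refine ⟨Finset.mem_univ _, ?_⟩
      have := hPadd _ _ (Finset.mem_filter.mp (Finset.mem_coe.mp hz)).2 hz₀'
      rw [merge_add, fun_add_self] at this
      exact this
    · intro z1 _ z2 _ h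
      exact add_right_cancel h

include hPadd in
lemma fiberB_le (z : {i // i ∉ R} → ZMod 2) :
    (Finset.univ.filter fun a : {i // i ∈ R} → ZMod 2 => P (merge R a z)).card
      ≤ (Finset.univ.filter fun a : {i // i ∈ R} → ZMod 2 => P (merge R a 0)).card := by
  classical
  rcases (Finset.univ.filter fun a : {i // i ∈ R} → ZMod 2 =>
      P (merge R a z)).eq_empty_or_nonempty with he | hne
  · rw [he]; simp
  · obtain ⟨a₀, ha₀⟩ := hne
    have ha₀' := (Finset.mem_filter.mp ha₀).2
    apply Finset.card_le_card_of_injOn (fun a => a + a₀)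
    · intro a ha
      rw [Finset.mem_coe, Finset.mem_filter]
      refine ⟨Finset.mem_univ _, ?_⟩
      have := hPadd _ _ (Finset.mem_filter.mp (Finset.mem_coe.mp ha)).2 ha₀'
      rw [merge_add, fun_add_self] at this
      exact this
    · intro a1 _ a2 _ h
      exact add_right_cancel h

include hPadd in
lemma proj_count (a b : {i // i ∈ R} → ZMod 2) :
    ∑ d : {i // i ∈ R} → ZMod 2,
      ((Finset.univ.filter fun z : {i // i ∉ R} → ZMod 2 =>
          P (merge R a z) ∧ P (merge R d z)).card
        * (Finset.univ.filter fun w : {i // i ∉ R} → ZMod 2 =>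
          P (merge R d w) ∧ P (merge R b w)).card)
      = (Finset.univ.filter fun u : {i // i ∈ R} → ZMod 2 => P (merge R u 0)).card
        * (Finset.univ.filter fun v : {i // i ∉ R} → ZMod 2 => P (merge R 0 v)).card
        * (Finset.univ.filter fun w : {i // i ∉ R} → ZMod 2 =>
          P (merge R a w) ∧ P (merge R b w)).card := by
  classical
  have step1 : (Finset.univ.filter
      (fun t : ({i // i ∈ R} → ZMod 2) × ({i // i ∉ R} → ZMod 2) × ({i // i ∉ R} → ZMod 2) =>
        (P (merge R a t.2.1) ∧ P (merge R t.1 t.2.1))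
          ∧ (P (merge R t.1 t.2.2) ∧ P (merge R b t.2.2)))).card
      = ∑ d : {i // i ∈ R} → ZMod 2,
        ((Finset.univ.filter fun z : {i // i ∉ R} → ZMod 2 =>
            P (merge R a z) ∧ P (merge R d z)).card
          * (Finset.univ.filter fun w : {i // i ∉ R} → ZMod 2 =>
            P (merge R d w) ∧ P (merge R b w)).card) := by
    rw [Finset.card_eq_sum_card_fiberwise (f := Prod.fst) (t := Finset.univ)
      (fun p _ => Finset.mem_univ _)]
    apply Finset.sum_congr rfl
    intro d _
    rw [← Finset.card_product]
    refine Finset.card_bij' (fun t _ => (t.2.1, t.2.2)) (fun zw _ => (d, zw.1, zw.2)) ?_ ?_ ?_ ?_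
    · rintro ⟨d', z, w⟩ ht
      simp only [Finset.mem_filter, Finset.mem_univ, true_and] at ht
      obtain ⟨⟨⟨h1, h2⟩, h3, h4⟩, h5⟩ := ht
      subst h5
      simp only [Finset.mem_product, Finset.mem_filter, Finset.mem_univ, true_and]
      exact ⟨⟨h1, h2⟩, h3, h4⟩
    · rintro ⟨z, w⟩ hzw
      simp only [Finset.mem_product, Finset.mem_filter, Finset.mem_univ, true_and] at hzw
      simp only [Finset.mem_filter, Finset.mem_univ, true_and]
      exact ⟨⟨⟨hzw.1.1, hzw.1.2⟩, hzw.2.1, hzw.2.2⟩, trivial⟩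
    · rintro ⟨d', z, w⟩ ht
      simp only [Finset.mem_filter, Finset.mem_univ, true_and] at ht
      exact Prod.ext ht.2.symm rfl
    · rintro ⟨z, w⟩ _
      rfl
  have step2 : (Finset.univ.filter
      (fun t : ({i // i ∈ R} → ZMod 2) × ({i // i ∉ R} → ZMod 2) × ({i // i ∉ R} → ZMod 2) =>
        (P (merge R a t.2.1) ∧ P (merge R t.1 t.2.1))
          ∧ (P (merge R t.1 t.2.2) ∧ P (merge R b t.2.2)))).card
      = (Finset.univ.filter fun u : {i // i ∈ R} → ZMod 2 => P (merge R u 0)).card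
        * ((Finset.univ.filter fun v : {i // i ∉ R} → ZMod 2 => P (merge R 0 v)).card
          * (Finset.univ.filter fun w : {i // i ∉ R} → ZMod 2 =>
            P (merge R a w) ∧ P (merge R b w)).card) := by
    rw [← Finset.card_product, ← Finset.card_product]
    refine Finset.card_bij' (fun t _ => (a + t.1, (t.2.1 + t.2.2, t.2.2)))
      (fun t _ => (a + t.1, (t.2.2 + t.2.1, t.2.2))) ?_ ?_ ?_ ?_
    · rintro ⟨d, z, w⟩ ht
      simp only [Finset.mem_filter, Finset.mem_univ, true_and] at ht
      obtain ⟨⟨haz, hdz⟩, hdw, hbw⟩ := ht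
      simp only [Finset.mem_product, Finset.mem_filter, Finset.mem_univ, true_and]
      refine ⟨?_, ?_, ?_, hbw⟩
      · have := hPadd _ _ haz hdz
        rw [merge_add, fun_add_self] at this
        exact this
      · have := hPadd _ _ hdz hdw
        rw [merge_add, fun_add_self] at this
        exact this
      · have h0 : P (merge R 0 (z + w)) := by
          have := hPadd _ _ hdz hdw
          rw [merge_add, fun_add_self] at this
          exact this
        have := hPadd _ _ haz h0
        rw [merge_add, add_zero, fun_add_add_cancel] at this
        exact this
    · rintro ⟨u, v, w⟩ ht
      simp only [Finset.mem_product, Finset.mem_filter, Finset.mem_univ, true_and] at ht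
      obtain ⟨hu, hv, haw, hbw⟩ := ht
      simp only [Finset.mem_filter, Finset.mem_univ, true_and]
      have hawv : P (merge R a (w + v)) := by
        have := hPadd _ _ haw hv
        rw [merge_add, add_zero] at this
        exact this
      refine ⟨⟨hawv, ?_⟩, ?_, hbw⟩
      · have := hPadd _ _ hawv hu
        rw [merge_add, add_zero] at this
        exact this
      · have := hPadd _ _ haw hu
        rw [merge_add, add_zero] at this
        exact this
    · rintro ⟨d, z, w⟩ _
      refine Prod.ext (fun_add_add_cancel a d) (Prod.ext ?_ rfl)
      show w + (z + w) = z
      rw [add_comm z w]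
      exact fun_add_add_cancel w z
    · rintro ⟨u, v, w⟩ _
      refine Prod.ext (fun_add_add_cancel a u) (Prod.ext ?_ rfl)
      show (w + v) + w = v
      rw [add_comm (w + v) w]
      exact fun_add_add_cancel w v
  rw [← step1, step2, mul_assoc]

end Counting

section State

variable {L : ℕ}

lemma psi0_formula (pol : Fin L → Bool) (q : Fin L → ZMod 2 → ℂ)
    (hq : ∀ i, q i = if pol i then qX else qZ) (Nz : ℕ)
    (hNz : Nz = (Finset.univ.filter fun i => pol i = false).card) (s : QV L) :
    (∏ i, q i (s i)) = if (∀ i, pol i = true → s i = 0)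
      then (((Real.sqrt 2)⁻¹ ^ Nz : ℝ) : ℂ) else 0 := by
  have hterm : ∀ i, q i (s i) = if pol i = true
      then (if s i = 0 then (1:ℂ) else 0) else (((Real.sqrt 2)⁻¹ : ℝ) : ℂ) := by
    intro i
    rw [hq i]
    by_cases h : pol i <;> simp [h, qX, qZ]
  rw [Finset.prod_congr rfl (fun i _ => hterm i), Finset.prod_ite, Finset.prod_boole,
    Finset.prod_const]
  have hcard : (Finset.univ.filter fun i => ¬ pol i = true).card = Nz := by
    rw [hNz]
    congr 1
    ext i
    simp [Bool.not_eq_true]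
  rw [hcard]
  have hcond : (∀ i ∈ Finset.univ.filter fun i => pol i = true, s i = 0)
      ↔ (∀ i, pol i = true → s i = 0) := by
    simp
  by_cases hc : ∀ i, pol i = true → s i = 0
  · rw [if_pos (hcond.mpr hc), if_pos hc]
    push_cast
    ring
  · rw [if_neg (fun h => hc (hcond.mp h)), if_neg hc, zero_mul]

lemma card_polW (pol : Fin L → Bool) (Nz : ℕ)
    (hNz : Nz = (Finset.univ.filter fun i => pol i = false).card) :
    (Finset.univ.filter fun s : QV L => ∀ i, pol i = true → s i = 0).card = 2 ^ Nz := by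
  have h1 : (Finset.univ.filter fun s : QV L => ∀ i, pol i = true → s i = 0)
      = Fintype.piFinset (fun i => if pol i = true then ({0} : Finset (ZMod 2))
          else Finset.univ) := by
    ext s
    simp only [Finset.mem_filter, Finset.mem_univ, true_and, Fintype.mem_piFinset]
    constructor
    · intro h i
      by_cases hp : pol i = true
      · simp [hp, h i hp]
      · simp [hp]
    · intro h i hp
      have := h i
      rw [if_pos hp] at this
      simpa using this
  rw [h1, Fintype.card_piFinset]
  have h2 : ∀ i, ((if pol i = true then ({0} : Finset (ZMod 2)) else Finset.univ).card)
      = if pol i = true then 1 else 2 := by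
    intro i
    by_cases hp : pol i = true <;> simp [hp]
  rw [Finset.prod_congr rfl (fun i _ => h2 i), Finset.prod_ite, Finset.prod_const,
    Finset.prod_const, one_pow, one_mul]
  congr 1
  rw [hNz]
  congr 1
  ext i
  simp [Bool.not_eq_true]

lemma card_filter_comp (σ : QV L → QV L) (hσ : Function.Bijective σ)
    (Pr : QV L → Prop) [DecidablePred Pr] :
    (Finset.univ.filter fun s => Pr (σ s)).card = (Finset.univ.filter Pr).card := by
  apply Finset.card_bij (fun s _ => σ s)
  · intro s hs
    rw [Finset.mem_filter] at hs ⊢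
    exact ⟨Finset.mem_univ _, hs.2⟩
  · intro s1 _ s2 _ h
    exact hσ.1 h
  · intro t ht
    rw [Finset.mem_filter] at ht
    obtain ⟨s, hs⟩ := hσ.2 t
    refine ⟨s, ?_, hs⟩
    rw [Finset.mem_filter]
    rw [hs]
    exact ⟨Finset.mem_univ _, ht.2⟩

end State

section Eigen

lemma eigen_dichotomy {n : Type*} [Fintype n] [DecidableEq n] {ρ : Matrix n n ℂ}
    (hρ : ρ.IsHermitian) {μ : ℝ} (hproj : ρ * ρ = (μ : ℂ) • ρ) (i : n) :
    hρ.eigenvalues i = 0 ∨ hρ.eigenvalues i = μ := by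
  set v := (WithLp.equiv 2 (n → ℂ)) (hρ.eigenvectorBasis i) with hv
  have heig : ρ.mulVec v = hρ.eigenvalues i • v := hρ.mulVec_eigenvectorBasis i
  have hvne : v ≠ 0 := by
    have h1 : hρ.eigenvectorBasis i ≠ 0 := hρ.eigenvectorBasis.orthonormal.ne_zero i
    intro h0
    apply h1
    have := congrArg (WithLp.equiv 2 (n → ℂ)).symm h0
    simpa [hv] using this
  obtain ⟨a, ha⟩ := Function.ne_iff.mp hvne
  have h2 : ρ.mulVec (ρ.mulVec v) = (μ:ℂ) • ρ.mulVec v := by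
    rw [Matrix.mulVec_mulVec, hproj, Matrix.smul_mulVec]
  rw [heig, Matrix.mulVec_smul, heig] at h2
  have h3 := congrFun h2 a
  simp only [Pi.smul_apply, Complex.real_smul, smul_eq_mul] at h3
  rcases eq_or_ne ((hρ.eigenvalues i : ℝ) : ℂ) 0 with hz | hz
  · left
    exact_mod_cast hz
  · right
    have hX : ((hρ.eigenvalues i : ℝ) : ℂ) * v a ≠ 0 := by
      simp only [Pi.zero_apply] at ha
      exact mul_ne_zero hz ha
    have h4 : ((hρ.eigenvalues i : ℝ) : ℂ) = (μ : ℂ) := mul_right_cancel₀ hX h3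
    exact_mod_cast h4
  
lemma sum_eigenvalues_eq_trace {n : Type*} [Fintype n] [DecidableEq n] {ρ : Matrix n n ℂ}
    (hρ : ρ.IsHermitian) :
    ((∑ i, hρ.eigenvalues i : ℝ) : ℂ) = ρ.trace := by
  exact_mod_cast hρ.trace_eq_sum_eigenvalues.symm

end Eigen

end C19

open C19

/-- in a random CNOT circuit the X- and Z-basis coherences of any
pure state are conserved (CNOTs permute both the X- and Z-basis states), and
consequently, for an initial product state with `N_x` X-polarized and
`N_z = L − N_x` Z-polarized qubits, the entanglement entropy of the region
`[1, x]` after any sequence of CNOTs satisfies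
`S(x) ≤ min (x, L − x, N_z, N_x)`. -/
theorem cnot_circuit_coherence_conserved_and_entanglement_bound {L : ℕ}
    (gates : List (Fin L × Fin L)) (hgates : ∀ p ∈ gates, p.1 ≠ p.2) :
    (∀ ψ : QV L → ℂ,
      shannonEntropy (fun s => ‖applyCNOTs gates ψ s‖ ^ 2) =
        shannonEntropy (fun s => ‖ψ s‖ ^ 2) ∧
      shannonEntropy (fun s => ‖zAmp (applyCNOTs gates ψ) s‖ ^ 2) =
        shannonEntropy (fun s => ‖zAmp ψ s‖ ^ 2)) ∧
    (∀ (pol : Fin L → Bool) (q : Fin L → ZMod 2 → ℂ)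
      (hq : ∀ i, q i = if pol i then qX else qZ)
      (Nx Nz : ℕ)
      (hNx : Nx = (Finset.univ.filter fun i => pol i = true).card)
      (hNz : Nz = (Finset.univ.filter fun i => pol i = false).card)
      (ψ0 : QV L → ℂ) (hψ0 : ψ0 = fun s => ∏ i, q i (s i))
      (x : ℕ) (hx : x ≤ L)
      (hR : (reducedDM (Finset.univ.filter fun i : Fin L => (i : ℕ) < x)
              (applyCNOTs gates ψ0)).IsHermitian),
      vonNeumannEntropy _ hR ≤
        min (min (x : ℝ) ((L : ℝ) - x)) (min (Nz : ℝ) (Nx : ℝ))) := by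

  constructor
  · intro ψ
    constructor
    · rw [applyCNOTs_eq]
      exact shannon_comp_bij (fun s => ‖ψ s‖ ^ 2) (gperm_bijective hgates)
    · have h1 : (fun s => ‖zAmp (applyCNOTs gates ψ) s‖ ^ 2)
          = fun s => ‖zAmp ψ (dperm gates s)‖ ^ 2 := by
        funext s
        rw [zAmp_applyCNOTs hgates]
      rw [h1]
      exact shannon_comp_bij (fun s => ‖zAmp ψ s‖ ^ 2) (dperm_bijective hgates)
  · intro pol q hq Nx Nz hNx hNz ψ0 hψ0 x hx hR
    classical
    set R : Finset (Fin L) := Finset.univ.filter fun i : Fin L => (i : ℕ) < x with hRdef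
    set ρ := reducedDM R (applyCNOTs gates ψ0) with hρdef
    have hσ : Function.Bijective (gperm gates) := gperm_bijective hgates
    -- the state after the circuit
    have hstate : applyCNOTs gates ψ0 = fun s =>
        if (∀ i, pol i = true → gperm gates s i = 0)
          then (((Real.sqrt 2)⁻¹ ^ Nz : ℝ) : ℂ) else 0 := by
      rw [applyCNOTs_eq]
      funext s
      rw [hψ0]
      exact psi0_formula pol q hq Nz hNz (gperm gates s)
    -- closure properties of the support predicate
    have hPadd : ∀ u v, (∀ i, pol i = true → gperm gates u i = 0) →
        (∀ i, pol i = true → gperm gates v i = 0) →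
        (∀ i, pol i = true → gperm gates (u + v) i = 0) := by
      intro u v hu hv i hi
      rw [gperm_add]
      show gperm gates u i + gperm gates v i = 0
      rw [hu i hi, hv i hi, add_zero]
    have hP0 : ∀ i, pol i = true → gperm gates (0 : QV L) i = 0 := by
      intro i _
      rw [gperm_zero]
      rfl
    -- cardinality of the support
    have hVcard : (Finset.univ.filter
        fun s : QV L => ∀ i, pol i = true → gperm gates s i = 0).card = 2 ^ Nz := by
      have h1 := card_filter_comp (gperm gates) hσ (fun u => ∀ i, pol i = true → u i = 0)
      exact h1.trans (card_polW pol Nz hNz)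
    -- abbreviations
    set kR := (Finset.univ.filter fun a : {i // i ∈ R} → ZMod 2 =>
      ∀ i, pol i = true → gperm gates (merge R a 0) i = 0).card with hkR
    set k0 := (Finset.univ.filter fun z : {i // i ∉ R} → ZMod 2 =>
      ∀ i, pol i = true → gperm gates (merge R 0 z) i = 0).card with hk0
    set c : ℝ := (Real.sqrt 2)⁻¹ ^ Nz with hc
    have hc2 : c ^ 2 = ((2:ℝ) ^ Nz)⁻¹ := by
      rw [hc, pow_right_comm, inv_pow, Real.sq_sqrt (by norm_num : (0:ℝ) ≤ 2), inv_pow]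
    -- matrix entries
    have hent : ∀ a b, ρ a b = (((Finset.univ.filter
        fun z : {i // i ∉ R} → ZMod 2 =>
          (∀ i, pol i = true → gperm gates (merge R a z) i = 0)
            ∧ (∀ i, pol i = true → gperm gates (merge R b z) i = 0)).card : ℕ) : ℂ)
        * ((c ^ 2 : ℝ) : ℂ) := by
      intro a b
      rw [hρdef]
      show (∑ z : {i // i ∉ R} → ZMod 2, (applyCNOTs gates ψ0) (merge R a z)
        * star ((applyCNOTs gates ψ0) (merge R b z))) = _
      have hterm : ∀ z : {i // i ∉ R} → ZMod 2,
          (applyCNOTs gates ψ0) (merge R a z) * star ((applyCNOTs gates ψ0) (merge R b z))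
          = if (∀ i, pol i = true → gperm gates (merge R a z) i = 0)
              ∧ (∀ i, pol i = true → gperm gates (merge R b z) i = 0)
            then ((c ^ 2 : ℝ) : ℂ) else 0 := by
        intro z
        rw [hstate]
        beta_reduce
        by_cases h1 : (∀ i, pol i = true → gperm gates (merge R a z) i = 0)
        · by_cases h2 : (∀ i, pol i = true → gperm gates (merge R b z) i = 0)
          · rw [if_pos h1, if_pos h2, if_pos (And.intro h1 h2)]
            rw [show star ((c : ℝ) : ℂ) = ((c : ℝ) : ℂ) from Complex.conj_ofReal c]
            rw [← Complex.ofReal_mul, ← pow_two]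
          · rw [if_pos h1, if_neg h2, if_neg (fun hc' => h2 hc'.2), star_zero, mul_zero]
        · rw [if_neg h1, zero_mul, if_neg (fun hc' => h1 hc'.1)]
      rw [Finset.sum_congr rfl (fun z _ => hterm z), ← Finset.sum_filter, Finset.sum_const,
        nsmul_eq_mul]
    -- projector equation
    have hproj : ρ * ρ = ((c ^ 2 * ((kR * k0 : ℕ) : ℝ) : ℝ) : ℂ) • ρ := by
      ext a b
      rw [Matrix.mul_apply]
      simp only [hent, Matrix.smul_apply, smul_eq_mul]
      have hnat := proj_count R
        (fun s => ∀ i, pol i = true → gperm gates s i = 0) hPadd a b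
      have hcast : (∑ d : {i // i ∈ R} → ZMod 2,
          (((Finset.univ.filter fun z : {i // i ∉ R} → ZMod 2 =>
            (∀ i, pol i = true → gperm gates (merge R a z) i = 0)
              ∧ (∀ i, pol i = true → gperm gates (merge R d z) i = 0)).card : ℕ) : ℂ)
          * (((Finset.univ.filter fun w : {i // i ∉ R} → ZMod 2 =>
            (∀ i, pol i = true → gperm gates (merge R d w) i = 0)
              ∧ (∀ i, pol i = true → gperm gates (merge R b w) i = 0)).card : ℕ) : ℂ))
          = ((kR : ℂ) * (k0 : ℂ)) * (((Finset.univ.filter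
            fun w : {i // i ∉ R} → ZMod 2 =>
              (∀ i, pol i = true → gperm gates (merge R a w) i = 0)
                ∧ (∀ i, pol i = true → gperm gates (merge R b w) i = 0)).card : ℕ) : ℂ) := by
        rw [hkR, hk0]
        exact_mod_cast congrArg (Nat.cast : ℕ → ℂ) hnat
      calc ∑ d, ((((Finset.univ.filter fun z : {i // i ∉ R} → ZMod 2 =>
            (∀ i, pol i = true → gperm gates (merge R a z) i = 0)
              ∧ (∀ i, pol i = true → gperm gates (merge R d z) i = 0)).card : ℕ) : ℂ)
            * ((c ^ 2 : ℝ) : ℂ))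
            * ((((Finset.univ.filter fun w : {i // i ∉ R} → ZMod 2 =>
            (∀ i, pol i = true → gperm gates (merge R d w) i = 0)
              ∧ (∀ i, pol i = true → gperm gates (merge R b w) i = 0)).card : ℕ) : ℂ)
            * ((c ^ 2 : ℝ) : ℂ))
          = (∑ d : {i // i ∈ R} → ZMod 2,
            (((Finset.univ.filter fun z : {i // i ∉ R} → ZMod 2 =>
              (∀ i, pol i = true → gperm gates (merge R a z) i = 0)
                ∧ (∀ i, pol i = true → gperm gates (merge R d z) i = 0)).card : ℕ) : ℂ)
            * (((Finset.univ.filter fun w : {i // i ∉ R} → ZMod 2 =>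
              (∀ i, pol i = true → gperm gates (merge R d w) i = 0)
                ∧ (∀ i, pol i = true → gperm gates (merge R b w) i = 0)).card : ℕ) : ℂ))
            * (((c ^ 2 : ℝ) : ℂ) * ((c ^ 2 : ℝ) : ℂ)) := by
              rw [Finset.sum_mul]
              apply Finset.sum_congr rfl
              intro d _
              ring
        _ = _ := by
              rw [hcast]
              push_cast
              ring
    -- trace is one
    have htrace : ρ.trace = 1 := by
      have hdiag : ∀ a : {i // i ∈ R} → ZMod 2,
          (Finset.univ.filter fun z : {i // i ∉ R} → ZMod 2 =>
            (∀ i, pol i = true → gperm gates (merge R a z) i = 0)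
              ∧ (∀ i, pol i = true → gperm gates (merge R a z) i = 0)).card
          = (Finset.univ.filter fun z : {i // i ∉ R} → ZMod 2 =>
            (∀ i, pol i = true → gperm gates (merge R a z) i = 0)).card := by
        intro a
        congr 1
        ext z
        simp [Finset.mem_filter, and_self]
      have hsumdiag := sumA R (fun s => ∀ i, pol i = true → gperm gates s i = 0)
      rw [hVcard] at hsumdiag
      show (∑ a, ρ a a) = 1
      calc (∑ a, ρ a a)
          = ∑ a : {i // i ∈ R} → ZMod 2, (((Finset.univ.filter
              fun z : {i // i ∉ R} → ZMod 2 =>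
                (∀ i, pol i = true → gperm gates (merge R a z) i = 0)).card : ℕ) : ℂ)
              * ((c ^ 2 : ℝ) : ℂ) := by
            apply Finset.sum_congr rfl
            intro a _
            rw [hent a a, hdiag a]
        _ = (((2:ℕ) ^ Nz : ℕ) : ℂ) * ((c ^ 2 : ℝ) : ℂ) := by
            rw [← Finset.sum_mul]
            congr 1
            rw [← hsumdiag]
            push_cast
            rfl
        _ = 1 := by
            rw [hc2]
            push_cast
            exact mul_inv_cancel₀ (pow_ne_zero _ (by norm_num : (2:ℂ) ≠ 0))
    -- eigenvalues sum to one
    have hsum : (∑ i, hR.eigenvalues i) = 1 := by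
      have h1 := sum_eigenvalues_eq_trace hR
      rw [htrace] at h1
      exact_mod_cast h1
    -- eigenvalue dichotomy
    set μ : ℝ := c ^ 2 * ((kR * k0 : ℕ) : ℝ) with hμ
    have hdich : ∀ i, hR.eigenvalues i = 0 ∨ hR.eigenvalues i = μ :=
      fun i => eigen_dichotomy hR hproj i
    -- positivity facts
    have hkRpos : 0 < kR := by
      rw [hkR, Finset.card_pos]
      refine ⟨0, ?_⟩
      rw [Finset.mem_filter]
      refine ⟨Finset.mem_univ _, ?_⟩
      rw [merge_zero]
      exact hP0
    have hk0pos : 0 < k0 := by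
      rw [hk0, Finset.card_pos]
      refine ⟨0, ?_⟩
      rw [Finset.mem_filter]
      refine ⟨Finset.mem_univ _, ?_⟩
      rw [merge_zero]
      exact hP0
    -- cardinalities of the regions
    have hRx : R.card = x := by
      have h1 : R.card = (Finset.univ : Finset (Fin x)).card := by
        refine Finset.card_bij'
          (fun i hi => (⟨(i : ℕ), by
            have := (Finset.mem_filter.mp hi).2
            exact this⟩ : Fin x))
          (fun k _ => (⟨(k : ℕ), lt_of_lt_of_le k.2 hx⟩ : Fin L)) ?_ ?_ ?_ ?_
        · intro i hi
          exact Finset.mem_univ _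
        · intro k _
          rw [hRdef, Finset.mem_filter]
          exact ⟨Finset.mem_univ _, k.2⟩
        · intro i hi
          rfl
        · intro k _
          rfl
      rw [h1, Finset.card_fin]
    have hcardA : Fintype.card ({i // i ∈ R} → ZMod 2) = 2 ^ x := by
      rw [Fintype.card_fun, ZMod.card, Fintype.card_coe, hRx]
    have hcardB : Fintype.card ({i // i ∉ R} → ZMod 2) = 2 ^ (L - x) := by
      rw [Fintype.card_fun, ZMod.card, Fintype.card_subtype_compl, Fintype.card_coe,
        Fintype.card_fin, hRx]
    -- the four counting inequalities
    have hN1 : 2 ^ Nz ≤ 2 ^ x * k0 := by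
      have h1 := sumA R (fun s => ∀ i, pol i = true → gperm gates s i = 0)
      rw [hVcard] at h1
      calc 2 ^ Nz = ∑ a : {i // i ∈ R} → ZMod 2, (Finset.univ.filter
            fun z : {i // i ∉ R} → ZMod 2 =>
              ∀ i, pol i = true → gperm gates (merge R a z) i = 0).card := h1.symm
        _ ≤ (Finset.univ : Finset ({i // i ∈ R} → ZMod 2)).card • k0 := by
            apply Finset.sum_le_card_nsmul
            intro a _
            rw [hk0]
            exact fiberA_le R _ hPadd a
        _ = 2 ^ x * k0 := by
            rw [smul_eq_mul, Finset.card_univ, hcardA]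
    have hN2 : 2 ^ Nz ≤ 2 ^ (L - x) * kR := by
      have h1 := sumB R (fun s => ∀ i, pol i = true → gperm gates s i = 0)
      rw [hVcard] at h1
      calc 2 ^ Nz = ∑ z : {i // i ∉ R} → ZMod 2, (Finset.univ.filter
            fun a : {i // i ∈ R} → ZMod 2 =>
              ∀ i, pol i = true → gperm gates (merge R a z) i = 0).card := h1.symm
        _ ≤ (Finset.univ : Finset ({i // i ∉ R} → ZMod 2)).card • kR := by
            apply Finset.sum_le_card_nsmul
            intro z _
            rw [hkR]
            exact fiberB_le R _ hPadd z
        _ = 2 ^ (L - x) * kR := by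
            rw [smul_eq_mul, Finset.card_univ, hcardB]
    have hNxNz : Nx + Nz = L := by
      rw [hNx, hNz]
      have h1 := Finset.card_filter_add_card_filter_not
        (s := (Finset.univ : Finset (Fin L))) (p := fun i => pol i = true)
      have h2 : (Finset.univ.filter fun i : Fin L => ¬ pol i = true)
          = Finset.univ.filter fun i : Fin L => pol i = false := by
        ext i
        simp [Bool.not_eq_true]
      rw [h2] at h1
      rw [h1, Finset.card_univ, Fintype.card_fin]
    have hN1' : 2 ^ Nz ≤ 2 ^ x * (kR * k0) :=
      le_trans hN1 (by
        apply Nat.mul_le_mul_left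
        exact Nat.le_mul_of_pos_left k0 hkRpos)
    have hN2' : 2 ^ Nz ≤ 2 ^ (L - x) * (kR * k0) :=
      le_trans hN2 (by
        apply Nat.mul_le_mul_left
        exact Nat.le_mul_of_pos_right kR hk0pos)
    have hN3 : 2 ^ Nz ≤ 2 ^ Nz * (kR * k0) :=
      Nat.le_mul_of_pos_right _ (Nat.mul_pos hkRpos hk0pos)
    have hN4 : 2 ^ Nz ≤ 2 ^ Nx * (kR * k0) := by
      have hxL : x + (L - x) = L := Nat.add_sub_cancel' hx
      have hL : (2:ℕ) ^ x * (2:ℕ) ^ (L - x) = 2 ^ Nz * 2 ^ Nx := by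
        rw [← pow_add, hxL, ← pow_add]
        congr 1
        omega
      have h2 : 2 ^ Nz * 2 ^ Nz ≤ 2 ^ Nz * (2 ^ Nx * (kR * k0)) := by
        calc 2 ^ Nz * 2 ^ Nz ≤ (2 ^ x * k0) * (2 ^ (L - x) * kR) :=
              Nat.mul_le_mul hN1 hN2
          _ = (2 ^ x * 2 ^ (L - x)) * (kR * k0) := by ring
          _ = (2 ^ Nz * 2 ^ Nx) * (kR * k0) := by rw [hL]
          _ = 2 ^ Nz * (2 ^ Nx * (kR * k0)) := by ring
      exact Nat.le_of_mul_le_mul_left h2 (pow_pos (by norm_num) _)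
    -- entropy equals -logb 2 μ
    have hS : vonNeumannEntropy ρ hR = -(Real.logb 2 μ) := by
      show (∑ i, -(hR.eigenvalues i * Real.logb 2 (hR.eigenvalues i))) = _
      have hterm : ∀ i, -(hR.eigenvalues i * Real.logb 2 (hR.eigenvalues i))
          = hR.eigenvalues i * (-(Real.logb 2 μ)) := by
        intro i
        rcases hdich i with h | h
        · rw [h]
          simp
        · rw [h]
          ring
      rw [Finset.sum_congr rfl (fun i _ => hterm i), ← Finset.sum_mul, hsum, one_mul]
    -- the log bound
    have key : ∀ e : ℕ, 2 ^ Nz ≤ 2 ^ e * (kR * k0) → -(Real.logb 2 μ) ≤ (e : ℝ) := by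
      intro e he
      have hpos : (0:ℝ) < ((2:ℝ) ^ e)⁻¹ := by positivity
      have hle : ((2:ℝ) ^ e)⁻¹ ≤ μ := by
        rw [hμ, hc2, inv_mul_eq_div, le_div_iff₀ (by positivity), inv_mul_le_iff₀ (by positivity)]
        exact_mod_cast he
      have hlog := Real.logb_le_logb_of_le (by norm_num : (1:ℝ) < 2) hpos hle
      rw [Real.logb_inv, Real.logb_pow, Real.logb_self_eq_one (by norm_num : (1:ℝ) < 2),
        mul_one] at hlog
      linarith
    rw [hS]
    refine le_min (le_min ?_ ?_) (le_min ?_ ?_)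
    · exact key x hN1'
    · have h1 := key (L - x) hN2'
      rwa [Nat.cast_sub hx] at h1
    · exact key Nz hN3
    · exact key Nx hN4
end
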